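/- Let V ⊆ ℂ² be a set with the property that for every nonzero polynomial Q ∈ ℂ[x, y] of total degree at most 2 there exist at least two points of V at which Q does not vanish, and suppose V contains three distinct collinear points. Then there exists a subset S ⊆ V with |S| = 7 such that no four points of S are collinear and no nonzero polynomial of total degree at most 2 vanishes at all seven points of S. -/

import Mathlib

open MvPolynomial



/-- 2D determinant of three points. -/

def dt (p q r : Fin 2 → ℂ) : ℂ :=
  (q 0 - p 0) * (r 1 - p 1) - (q 1 - p 1) * (r 0 - p 0)

lemma dt_def (p q r : Fin 2 → ℂ) :
    dt p q r = (q 0 - p 0) * (r 1 - p 1) - (q 1 - p 1) * (r 0 - p 0) := rfl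

lemma pt_ext {p q : Fin 2 → ℂ} (h0 : p 0 = q 0) (h1 : p 1 = q 1) : p = q := by
  funext i; fin_cases i <;> assumption

lemma pt_ne {p q : Fin 2 → ℂ} (h : p ≠ q) : p 0 ≠ q 0 ∨ p 1 ≠ q 1 := by
  by_contra hc
  push_neg at hc
  exact h (pt_ext hc.1 hc.2)

/-- From two dets vanishing at common vertex, third det vanishes. -/

lemma TD {p q r h : Fin 2 → ℂ} (hA : dt p q h = 0) (hB : dt p r h = 0)
    (hne : h ≠ p) : dt p q r = 0 := by
  rcases pt_ne hne with h0 | h0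
  · have key : dt p q r * (h 0 - p 0) = 0 := by
      simp only [dt_def] at *
      linear_combination (r 0 - p 0) * hA - (q 0 - p 0) * hB
    rcases mul_eq_zero.mp key with h' | h'
    · exact h'
    · exact absurd (by linear_combination h') h0
  · have key : dt p q r * (h 1 - p 1) = 0 := by
      simp only [dt_def] at *
      linear_combination (r 1 - p 1) * hA - (q 1 - p 1) * hB
    rcases mul_eq_zero.mp key with h' | h'
    · exact h'
    · exact absurd (by linear_combination h') h0

/-- Parametrize a point on the line through two distinct points. -/

lemma PARAM {p q r : Fin 2 → ℂ} (hpq : p ≠ q) (h : dt p q r = 0) :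
    ∃ t : ℂ, r 0 - p 0 = t * (q 0 - p 0) ∧ r 1 - p 1 = t * (q 1 - p 1) := by
  simp only [dt_def] at h
  rcases pt_ne hpq with h0 | h0
  · have h0' : q 0 - p 0 ≠ 0 := sub_ne_zero.mpr (Ne.symm h0)
    refine ⟨(r 0 - p 0) / (q 0 - p 0), by field_simp, ?_⟩
    field_simp
    linear_combination h
  · have h0' : q 1 - p 1 ≠ 0 := sub_ne_zero.mpr (Ne.symm h0)
    refine ⟨(r 1 - p 1) / (q 1 - p 1), ?_, by field_simp⟩
    field_simp
    linear_combination -h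



/-- the linear polynomial defining the line through p and q -/

noncomputable def lnp (p q : Fin 2 → ℂ) : MvPolynomial (Fin 2) ℂ :=
  C (q 0 - p 0) * X 1 - C (q 1 - p 1) * X 0
    + C ((q 1 - p 1) * p 0 - (q 0 - p 0) * p 1)

lemma eval_lnp (p q r : Fin 2 → ℂ) : eval r (lnp p q) = dt p q r := by
  simp [lnp, dt]; ring

lemma lnp_ne_zero {p q : Fin 2 → ℂ} (h : p ≠ q) : lnp p q ≠ 0 := by
  intro h0
  apply h
  apply pt_ext
  · have h1 := congrArg (eval (fun i : Fin 2 => if i = 0 then p 0 else p 1 + 1)) h0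
    rw [eval_lnp] at h1
    simp [dt] at h1
    linear_combination -h1
  · have h1 := congrArg (eval (fun i : Fin 2 => if i = 0 then p 0 + 1 else p 1)) h0
    rw [eval_lnp] at h1
    simp [dt] at h1
    linear_combination h1

lemma lin_totalDegree (a b c : ℂ) :
    (C a * X 1 - C b * X 0 + C c : MvPolynomial (Fin 2) ℂ).totalDegree ≤ 1 := by
  apply le_trans (totalDegree_add _ _)
  rw [sup_le_iff]
  constructor
  · rw [sub_eq_add_neg]
    apply le_trans (totalDegree_add _ _)
    rw [sup_le_iff]
    constructor
    · exact le_trans (totalDegree_mul _ _) (by rw [totalDegree_C, totalDegree_X])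
    · rw [totalDegree_neg]
      exact le_trans (totalDegree_mul _ _) (by rw [totalDegree_C, totalDegree_X])
  · rw [totalDegree_C]; exact Nat.zero_le _

lemma lnp_totalDegree (p q : Fin 2 → ℂ) : (lnp p q).totalDegree ≤ 1 :=
  lin_totalDegree _ _ _



lemma collinear_iff_dt {p q r : Fin 2 → ℂ} (hpq : p ≠ q) :
    Collinear ℂ ({p, q, r} : Set (Fin 2 → ℂ)) ↔ dt p q r = 0 := by
  constructor
  · intro hcol
    rw [collinear_iff_of_mem (show p ∈ ({p, q, r} : Set (Fin 2 → ℂ)) by simp)] at hcol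
    obtain ⟨v, hv⟩ := hcol
    obtain ⟨tq, hq⟩ := hv q (by simp)
    obtain ⟨tr, hr⟩ := hv r (by simp)
    have hq0 : q 0 = tq * v 0 + p 0 := by rw [hq]; simp
    have hq1 : q 1 = tq * v 1 + p 1 := by rw [hq]; simp
    have hr0 : r 0 = tr * v 0 + p 0 := by rw [hr]; simp
    have hr1 : r 1 = tr * v 1 + p 1 := by rw [hr]; simp
    simp only [dt]
    rw [hq0, hq1, hr0, hr1]
    ring
  · intro h
    obtain ⟨t, ht0, ht1⟩ := PARAM hpq h
    rw [collinear_iff_of_mem (show p ∈ ({p, q, r} : Set (Fin 2 → ℂ)) by simp)]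
    refine ⟨q - p, ?_⟩
    intro x hx
    rcases hx with rfl | rfl | rfl
    · exact ⟨0, by simp⟩
    · exact ⟨1, by simp⟩
    · refine ⟨t, ?_⟩
      apply pt_ext
      · simp; linear_combination ht0
      · simp; linear_combination ht1



/-- monomial exponent vector (i, j) on Fin 2 -/

noncomputable def mn (i j : ℕ) : Fin 2 →₀ ℕ := Finsupp.single 0 i + Finsupp.single 1 j

lemma mn_apply0 (i j : ℕ) : mn i j 0 = i := by
  simp [mn, Finsupp.single_apply]

lemma mn_apply1 (i j : ℕ) : mn i j 1 = j := by
  simp [mn, Finsupp.single_apply]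

lemma mn_inj {i j i' j' : ℕ} (h : mn i j = mn i' j') : i = i' ∧ j = j' := by
  constructor
  · have := congrArg (fun f => f 0) h; simpa [mn_apply0] using this
  · have := congrArg (fun f => f 1) h; simpa [mn_apply1] using this

lemma eq_mn (m : Fin 2 →₀ ℕ) : m = mn (m 0) (m 1) := by
  ext i
  fin_cases i <;> simp [mn, Finsupp.single_apply]

lemma rep (Q : MvPolynomial (Fin 2) ℂ) (hQ : Q.totalDegree ≤ 2) :
    ∃ k0 k1 k2 k3 k4 k5 : ℂ, ∀ z : Fin 2 → ℂ,
      eval z Q = k0 + k1 * z 0 + k2 * z 1 + k3 * z 0 ^ 2 + k4 * (z 0 * z 1)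
        + k5 * z 1 ^ 2 := by
  classical
  refine ⟨coeff (mn 0 0) Q, coeff (mn 1 0) Q, coeff (mn 0 1) Q, coeff (mn 2 0) Q,
    coeff (mn 1 1) Q, coeff (mn 0 2) Q, fun z => ?_⟩
  have hsub : Q.support ⊆ ({mn 0 0, mn 1 0, mn 0 1, mn 2 0, mn 1 1, mn 0 2} :
      Finset (Fin 2 →₀ ℕ)) := by
    intro m hm
    have hdeg : (m.sum fun _ e => e) ≤ Q.totalDegree := le_totalDegree hm
    have hsum : (m.sum fun _ e => e) = m 0 + m 1 := by
      rw [Finsupp.sum_fintype _ _ (fun _ => rfl), Fin.sum_univ_two]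
    have h2 : m 0 + m 1 ≤ 2 := by omega
    have hm' := eq_mn m
    simp only [Finset.mem_insert, Finset.mem_singleton]
    have hb0 : m 0 ≤ 2 := by omega
    have hb1 : m 1 ≤ 2 := by omega
    set n0 := m 0 with hn0
    set n1 := m 1 with hn1
    clear_value n0 n1
    interval_cases n0 <;> interval_cases n1 <;> first | tauto | omega
  have key : eval z Q = ∑ m ∈ ({mn 0 0, mn 1 0, mn 0 1, mn 2 0, mn 1 1, mn 0 2} :
      Finset (Fin 2 →₀ ℕ)), coeff m Q * (z 0 ^ m 0 * z 1 ^ m 1) := by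
    conv_lhs => rw [Q.as_sum]
    rw [map_sum]
    rw [Finset.sum_subset hsub]
    · apply Finset.sum_congr rfl
      intro m _
      rw [eval_monomial]
      congr 1
      rw [Finsupp.prod_fintype _ _ (fun _ => pow_zero _), Fin.prod_univ_two]
    · intro m _ hm
      rw [notMem_support_iff.mp hm]
      simp
  rw [key]
  have hne : ∀ {i j i' j' : ℕ}, ¬(i = i' ∧ j = j') → mn i j ≠ mn i' j' :=
    fun h h' => h (mn_inj h')
  rw [Finset.sum_insert (by
      simp only [Finset.mem_insert, Finset.mem_singleton]
      push_neg
      exact ⟨hne (by omega), hne (by omega), hne (by omega), hne (by omega), hne (by omega)⟩),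
    Finset.sum_insert (by
      simp only [Finset.mem_insert, Finset.mem_singleton]
      push_neg
      exact ⟨hne (by omega), hne (by omega), hne (by omega), hne (by omega)⟩),
    Finset.sum_insert (by
      simp only [Finset.mem_insert, Finset.mem_singleton]
      push_neg
      exact ⟨hne (by omega), hne (by omega), hne (by omega)⟩),
    Finset.sum_insert (by
      simp only [Finset.mem_insert, Finset.mem_singleton]
      push_neg
      exact ⟨hne (by omega), hne (by omega)⟩),
    Finset.sum_insert (by
      simp only [Finset.mem_singleton]
      exact hne (by omega)),
    Finset.sum_singleton]
  simp only [mn_apply0, mn_apply1]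
  ring



/-- scalar conic function -/

def P6 (k0 k1 k2 k3 k4 k5 z0 z1 : ℂ) : ℂ :=
  k0 + k1 * z0 + k2 * z1 + k3 * z0 ^ 2 + k4 * (z0 * z1) + k5 * z1 ^ 2

lemma P6_swap (k0 k1 k2 k3 k4 k5 z0 z1 : ℂ) :
    P6 k0 k1 k2 k3 k4 k5 z0 z1 = P6 k0 k2 k1 k5 k4 k3 z1 z0 := by
  simp only [P6]; ring

/-- Core algebraic lemma: a conic vanishing at three distinct points of a line
and at three non-collinear points off the line vanishes identically. -/

lemma CORE (k0 k1 k2 k3 k4 k5 A0 A1 V0 V1 s w0 w1 x0 x1 y0 y1 : ℂ)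
    (hV0 : V0 ≠ 0) (hs0 : s ≠ 0) (hs1 : s ≠ 1)
    (h0 : P6 k0 k1 k2 k3 k4 k5 A0 A1 = 0)
    (h1 : P6 k0 k1 k2 k3 k4 k5 (A0 + V0) (A1 + V1) = 0)
    (h2 : P6 k0 k1 k2 k3 k4 k5 (A0 + s * V0) (A1 + s * V1) = 0)
    (hw : P6 k0 k1 k2 k3 k4 k5 w0 w1 = 0)
    (hLw : V0 * (w1 - A1) - V1 * (w0 - A0) ≠ 0)
    (hx : P6 k0 k1 k2 k3 k4 k5 x0 x1 = 0)
    (hLx : V0 * (x1 - A1) - V1 * (x0 - A0) ≠ 0)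
    (hy : P6 k0 k1 k2 k3 k4 k5 y0 y1 = 0)
    (hLy : V0 * (y1 - A1) - V1 * (y0 - A0) ≠ 0)
    (hdet : (x0 - w0) * (y1 - w1) - (x1 - w1) * (y0 - w0) ≠ 0) :
    ∀ z0 z1 : ℂ, P6 k0 k1 k2 k3 k4 k5 z0 z1 = 0 := by
  simp only [P6] at *
  -- Taylor coefficients along the line
  set β := k1 * V0 + k2 * V1 + 2 * k3 * A0 * V0 + k4 * (A0 * V1 + A1 * V0)
    + 2 * k5 * A1 * V1 with hβdef
  set γ := k3 * V0 ^ 2 + k4 * V0 * V1 + k5 * V1 ^ 2 with hγdef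
  have hbg : β + γ = 0 := by rw [hβdef, hγdef]; linear_combination h1 - h0
  have hbg2 : s * β + s ^ 2 * γ = 0 := by rw [hβdef, hγdef]; linear_combination h2 - h0
  have hγ0 : γ = 0 := by
    have h3 : γ * (s * (s - 1)) = 0 := by linear_combination hbg2 - s * hbg
    rcases mul_eq_zero.mp h3 with h' | h'
    · exact h'
    · rcases mul_eq_zero.mp h' with h'' | h''
      · exact absurd h'' hs0
      · exact absurd (by linear_combination h'') hs1
  have hβ0 : β = 0 := by linear_combination hbg - hγ0
  rw [hβdef] at hβ0; rw [hγdef] at hγ0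
  -- the linear factor values
  set M : ℂ → ℂ → ℂ := fun z0 z1 =>
    V0 * (k2 + k4 * z0 + 2 * k5 * z1) - k5 * (V0 * (z1 - A1) - V1 * (z0 - A0))
    with hMdef
  have hPM : ∀ z0 z1 : ℂ,
      V0 ^ 2 * (k0 + k1 * z0 + k2 * z1 + k3 * z0 ^ 2 + k4 * (z0 * z1) + k5 * z1 ^ 2)
        = (V0 * (z1 - A1) - V1 * (z0 - A0)) * M z0 z1 := by
    intro z0 z1
    rw [hMdef]
    linear_combination V0 ^ 2 * h0 + V0 * (z0 - A0) * hβ0 + (z0 - A0) ^ 2 * hγ0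
  have hzero : ∀ u0 u1 : ℂ, (k0 + k1 * u0 + k2 * u1 + k3 * u0 ^ 2 + k4 * (u0 * u1) + k5 * u1 ^ 2 = 0) →
      (V0 * (u1 - A1) - V1 * (u0 - A0) ≠ 0) → M u0 u1 = 0 := by
    intro u0 u1 hu hLu
    have huM := hPM u0 u1
    rw [hu] at huM
    rcases mul_eq_zero.mp (show (V0 * (u1 - A1) - V1 * (u0 - A0)) * M u0 u1 = 0 by
      linear_combination -huM) with h' | h'
    · exact absurd h' hLu
    · exact h'
  have hMw : M w0 w1 = 0 := hzero w0 w1 hw hLw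
  have hMx : M x0 x1 = 0 := hzero x0 x1 hx hLx
  have hMy : M y0 y1 = 0 := hzero y0 y1 hy hLy
  -- linear coefficients of M
  set Ap := V0 * k2 - k5 * (V1 * A0 - V0 * A1) with hApdef
  set Bp := V0 * k4 + k5 * V1 with hBpdef
  set Cp := V0 * k5 with hCpdef
  have hMco : ∀ z0 z1 : ℂ, M z0 z1 = Ap + Bp * z0 + Cp * z1 := by
    intro z0 z1
    rw [hMdef, hApdef, hBpdef, hCpdef]
    ring
  rw [hMco] at hMw hMx hMy
  have hBp : Bp = 0 := by
    have h3 : Bp * ((x0 - w0) * (y1 - w1) - (x1 - w1) * (y0 - w0)) = 0 := by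
      linear_combination (y1 - w1) * hMx - (y1 - w1) * hMw - (x1 - w1) * hMy + (x1 - w1) * hMw
    rcases mul_eq_zero.mp h3 with h' | h'
    · exact h'
    · exact absurd h' hdet
  have hCp : Cp = 0 := by
    have h3 : Cp * ((x0 - w0) * (y1 - w1) - (x1 - w1) * (y0 - w0)) = 0 := by
      linear_combination (x0 - w0) * hMy - (x0 - w0) * hMw - (y0 - w0) * hMx + (y0 - w0) * hMw
    rcases mul_eq_zero.mp h3 with h' | h'
    · exact h'
    · exact absurd h' hdet
  have hAp : Ap = 0 := by
    rw [hBp, hCp] at hMw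
    linear_combination hMw
  intro z0 z1
  have hfin := hPM z0 z1
  rw [hMco, hAp, hBp, hCp] at hfin
  have : V0 ^ 2 * (k0 + k1 * z0 + k2 * z1 + k3 * z0 ^ 2 + k4 * (z0 * z1) + k5 * z1 ^ 2) = 0 := by
    rw [hfin]; ring
  rcases mul_eq_zero.mp this with h' | h'
  · exact absurd h' (pow_ne_zero 2 hV0)
  · exact h'

lemma four_of_ncard_four {α : Type*} {T : Set α} (hfin : T.Finite) (h4 : T.ncard = 4) :
    ∃ p1 p2 p3 p4, p1 ∈ T ∧ p2 ∈ T ∧ p3 ∈ T ∧ p4 ∈ T ∧ p1 ≠ p2 ∧ p1 ≠ p3 ∧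
      p1 ≠ p4 ∧ p2 ≠ p3 ∧ p2 ≠ p4 ∧ p3 ≠ p4 := by
  obtain ⟨p1, hp1⟩ := Set.nonempty_of_ncard_ne_zero (show T.ncard ≠ 0 by omega)
  have hf1 : (T \ {p1}).Finite := hfin.diff
  have h3 : (T \ {p1}).ncard = 3 := by
    rw [Set.ncard_diff_singleton_of_mem hp1]; omega
  obtain ⟨p2, hp2⟩ := Set.nonempty_of_ncard_ne_zero (show (T \ {p1}).ncard ≠ 0 by omega)
  have hf2 : ((T \ {p1}) \ {p2}).Finite := hf1.diff
  have h2 : ((T \ {p1}) \ {p2}).ncard = 2 := by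
    rw [Set.ncard_diff_singleton_of_mem hp2]; omega
  obtain ⟨p3, hp3⟩ := Set.nonempty_of_ncard_ne_zero
    (show ((T \ {p1}) \ {p2}).ncard ≠ 0 by omega)
  have hf3 : (((T \ {p1}) \ {p2}) \ {p3}).Finite := hf2.diff
  have h1 : (((T \ {p1}) \ {p2}) \ {p3}).ncard = 1 := by
    rw [Set.ncard_diff_singleton_of_mem hp3]; omega
  obtain ⟨p4, hp4⟩ := Set.nonempty_of_ncard_ne_zero
    (show (((T \ {p1}) \ {p2}) \ {p3}).ncard ≠ 0 by omega)
  simp only [Set.mem_diff, Set.mem_singleton_iff] at hp2 hp3 hp4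
  exact ⟨p1, p2, p3, p4, hp1, hp2.1, hp3.1.1, hp4.1.1.1,
    fun h => hp2.2 h.symm, fun h => hp3.1.2 h.symm, fun h => hp4.1.1.2 h.symm,
    fun h => hp3.2 h.symm, fun h => hp4.1.2 h.symm, fun h => hp4.2 h.symm⟩

lemma dt_self_left (p r : Fin 2 → ℂ) : dt p p r = 0 := by simp only [dt]; ring

lemma dt_self_right (p q : Fin 2 → ℂ) : dt p q q = 0 := by simp only [dt]; ring

lemma dt_self_outer (p q : Fin 2 → ℂ) : dt p q p = 0 := by simp only [dt]; ring

lemma pigeonAAAA {α : Type*} {a b c p1 p2 p3 p4 : α}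
    (hA1 : p1 = a ∨ p1 = b ∨ p1 = c) (hA2 : p2 = a ∨ p2 = b ∨ p2 = c)
    (hA3 : p3 = a ∨ p3 = b ∨ p3 = c) (hA4 : p4 = a ∨ p4 = b ∨ p4 = c)
    (h12 : p1 ≠ p2) (h13 : p1 ≠ p3) (h14 : p1 ≠ p4)
    (h23 : p2 ≠ p3) (h24 : p2 ≠ p4) (h34 : p3 ≠ p4) : False := by
  rcases hA1 with h1 | h1 | h1 <;> rcases hA2 with h2 | h2 | h2 <;>
    rcases hA3 with h3 | h3 | h3 <;> rcases hA4 with h4 | h4 | h4 <;>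
    first
    | exact h12 (h1.trans h2.symm)
    | exact h13 (h1.trans h3.symm)
    | exact h14 (h1.trans h4.symm)
    | exact h23 (h2.trans h3.symm)
    | exact h24 (h2.trans h4.symm)
    | exact h34 (h3.trans h4.symm)

set_option maxHeartbeats 1000000 in
/-- Main assembly lemma: given 3 distinct collinear points of V and 4 points of V
off that line, no 3 of which are collinear, the required 7-point set exists. -/
lemma FINAL (V : Set (Fin 2 → ℂ))
    (a b c w x y z : Fin 2 → ℂ)
    (haV : a ∈ V) (hbV : b ∈ V) (hcV : c ∈ V) (hwV : w ∈ V) (hxV : x ∈ V)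
    (hyV : y ∈ V) (hzV : z ∈ V)
    (hab : a ≠ b) (hac : a ≠ c) (hbc : b ≠ c)
    (habc : dt a b c = 0)
    (hw : dt a b w ≠ 0) (hx : dt a b x ≠ 0) (hy : dt a b y ≠ 0) (hz : dt a b z ≠ 0)
    (d1 : dt w x y ≠ 0) (d2 : dt w x z ≠ 0) (d3 : dt w y z ≠ 0) (d4 : dt x y z ≠ 0) :
    ∃ S ⊆ V, S.ncard = 7 ∧
      (∀ T ⊆ S, T.ncard = 4 → ¬ Collinear ℂ T) ∧
      ∀ Q : MvPolynomial (Fin 2) ℂ, Q ≠ 0 → Q.totalDegree ≤ 2 →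
        ∃ p ∈ S, MvPolynomial.eval p Q ≠ 0 := by
  -- distinctness from determinants
  have hwx : w ≠ x := fun h => d1 (h ▸ dt_self_left x y)
  have hwy : w ≠ y := fun h => d1 (by rw [h]; exact dt_self_outer y x)
  have hwz : w ≠ z := fun h => d2 (by rw [h]; exact dt_self_outer z x)
  have hxy : x ≠ y := fun h => d1 (by rw [h]; exact dt_self_right w y)
  have hxz : x ≠ z := fun h => d2 (by rw [h]; exact dt_self_right w z)
  have hyz : y ≠ z := fun h => d4 (by rw [h]; exact dt_self_right x z)
  have hEA : ∀ u : Fin 2 → ℂ, dt a b u ≠ 0 → u ≠ a ∧ u ≠ b ∧ u ≠ c := by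
    intro u hu
    exact ⟨fun h => hu (h ▸ dt_self_outer a b), fun h => hu (h ▸ dt_self_right a b),
      fun h => hu (h ▸ habc)⟩
  obtain ⟨hwa, hwb, hwc⟩ := hEA w hw
  obtain ⟨hxa, hxb, hxc⟩ := hEA x hx
  obtain ⟨hya, hyb, hyc⟩ := hEA y hy
  obtain ⟨hza, hzb, hzc⟩ := hEA z hz
  -- line parametrization
  obtain ⟨s, hc0, hc1⟩ := PARAM hab habc
  have hs0 : s ≠ 0 := by
    intro h
    rw [h] at hc0 hc1
    exact hac (pt_ext (by linear_combination hc0) (by linear_combination hc1)).symm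
  have hs1 : s ≠ 1 := by
    intro h
    rw [h] at hc0 hc1
    exact hbc (pt_ext (by linear_combination hc0) (by linear_combination hc1)).symm
  refine ⟨{a, b, c, w, x, y, z}, ?_, ?_, ?_, ?_⟩
  · -- subset of V
    intro u hu
    simp only [Set.mem_insert_iff, Set.mem_singleton_iff] at hu
    rcases hu with rfl | rfl | rfl | rfl | rfl | rfl | rfl <;> assumption
  · -- cardinality
    rw [Set.ncard_insert_of_notMem (by
        simp only [Set.mem_insert_iff, Set.mem_singleton_iff]; push_neg
        exact ⟨hab, hac, Ne.symm hwa, Ne.symm hxa, Ne.symm hya, Ne.symm hza⟩),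
      Set.ncard_insert_of_notMem (by
        simp only [Set.mem_insert_iff, Set.mem_singleton_iff]; push_neg
        exact ⟨hbc, Ne.symm hwb, Ne.symm hxb, Ne.symm hyb, Ne.symm hzb⟩),
      Set.ncard_insert_of_notMem (by
        simp only [Set.mem_insert_iff, Set.mem_singleton_iff]; push_neg
        exact ⟨Ne.symm hwc, Ne.symm hxc, Ne.symm hyc, Ne.symm hzc⟩),
      Set.ncard_insert_of_notMem (by
        simp only [Set.mem_insert_iff, Set.mem_singleton_iff]; push_neg
        exact ⟨hwx, hwy, hwz⟩),
      Set.ncard_insert_of_notMem (by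
        simp only [Set.mem_insert_iff, Set.mem_singleton_iff]; push_neg
        exact ⟨hxy, hxz⟩),
      Set.ncard_insert_of_notMem (by simp only [Set.mem_singleton_iff]; exact hyz),
      Set.ncard_singleton]
  · -- no four collinear
    intro T hTS hT4 hcolT
    have hTfin : T.Finite := (Set.toFinite _).subset hTS
    obtain ⟨p1, p2, p3, p4, hp1, hp2, hp3, hp4, h12, h13, h14, h23, h24, h34⟩ :=
      four_of_ncard_four hTfin hT4
    have hmem : ∀ u, u ∈ T → (u = a ∨ u = b ∨ u = c) ∨ (u = w ∨ u = x ∨ u = y ∨ u = z) := by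
      intro u hu
      have := hTS hu
      simp only [Set.mem_insert_iff, Set.mem_singleton_iff] at this
      tauto
    have KA : ∀ u v', (u = a ∨ u = b ∨ u = c) → (v' = a ∨ v' = b ∨ v' = c) → u ≠ v' →
        ∀ t, (t = w ∨ t = x ∨ t = y ∨ t = z) → u ∈ T → v' ∈ T → t ∈ T → False := by
      intro u v' hAu hAv huv t hEt huT hvT htT
      have htL : dt a b t ≠ 0 := by rcases hEt with rfl | rfl | rfl | rfl <;> assumption
      have hcol3 : Collinear ℂ ({u, v', t} : Set (Fin 2 → ℂ)) :=
        hcolT.subset (by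
          intro r hr
          simp only [Set.mem_insert_iff, Set.mem_singleton_iff] at hr
          rcases hr with rfl | rfl | rfl <;> assumption)
      have hdt : dt u v' t = 0 := (collinear_iff_dt huv).mp hcol3
      rcases hAu with h | h | h <;> rcases hAv with h' | h' | h' <;> rw [h, h'] at hdt
      · exact huv (h.trans h'.symm)
      · exact htL hdt
      · -- u = a, v' = c : s * dt a b t = 0
        apply htL
        have key : s * dt a b t = 0 := by
          simp only [dt] at hdt ⊢
          linear_combination hdt - (t 1 - a 1) * hc0 + (t 0 - a 0) * hc1
        rcases mul_eq_zero.mp key with h' | h'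
        · exact absurd h' hs0
        · exact h'
      · exact htL (by simp only [dt] at hdt ⊢; linear_combination -hdt)
      · exact huv (h.trans h'.symm)
      · -- u = b, v' = c : (s-1) * dt a b t = 0
        apply htL
        have key : (s - 1) * dt a b t = 0 := by
          simp only [dt] at hdt ⊢
          linear_combination hdt - (t 1 - b 1) * hc0 + (t 0 - b 0) * hc1
        rcases mul_eq_zero.mp key with h' | h'
        · exact absurd (by linear_combination h') hs1
        · exact h'
      · -- u = c, v' = a
        apply htL
        have key : s * dt a b t = 0 := by
          simp only [dt] at hdt ⊢
          linear_combination -hdt - (t 1 - a 1) * hc0 + (t 0 - a 0) * hc1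
        rcases mul_eq_zero.mp key with h' | h'
        · exact absurd h' hs0
        · exact h'
      · -- u = c, v' = b
        apply htL
        have key : (s - 1) * dt a b t = 0 := by
          simp only [dt] at hdt ⊢
          linear_combination -hdt - (t 1 - b 1) * hc0 + (t 0 - b 0) * hc1
        rcases mul_eq_zero.mp key with h' | h'
        · exact absurd (by linear_combination h') hs1
        · exact h'
      · exact huv (h.trans h'.symm)
    have KE : ∀ u v' t, (u = w ∨ u = x ∨ u = y ∨ u = z) → (v' = w ∨ v' = x ∨ v' = y ∨ v' = z) →
        (t = w ∨ t = x ∨ t = y ∨ t = z) → u ≠ v' → u ≠ t → v' ≠ t →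
        u ∈ T → v' ∈ T → t ∈ T → False := by
      intro u v' t hEu hEv hEt huv hut hvt huT hvT htT
      have hsub : ∀ r, r = u ∨ r = v' ∨ r = t → r ∈ T := by
        intro r hr; rcases hr with rfl | rfl | rfl <;> assumption
      have hC : ∀ p q r : Fin 2 → ℂ, p ∈ T → q ∈ T → r ∈ T → p ≠ q →
          dt p q r = 0 := by
        intro p q r hp hq hr hpq
        exact (collinear_iff_dt hpq).mp (hcolT.subset (by
          intro o ho
          simp only [Set.mem_insert_iff, Set.mem_singleton_iff] at ho
          rcases ho with rfl | rfl | rfl <;> assumption))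
      -- find which three of w x y z appear among u v' t and contradict
      rcases hEu with h | h | h | h <;> rcases hEv with h' | h' | h' | h' <;>
        rcases hEt with h'' | h'' | h'' | h'' <;>
        first
        | exact huv (h.trans h'.symm)
        | exact hut (h.trans h''.symm)
        | exact hvt (h'.trans h''.symm)
        | exact d1 (hC w x y (hsub w (by first | exact Or.inl h.symm | exact Or.inr (Or.inl h'.symm) | exact Or.inr (Or.inr h''.symm))) (hsub x (by first | exact Or.inl h.symm | exact Or.inr (Or.inl h'.symm) | exact Or.inr (Or.inr h''.symm))) (hsub y (by first | exact Or.inl h.symm | exact Or.inr (Or.inl h'.symm) | exact Or.inr (Or.inr h''.symm))) hwx)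
        | exact d2 (hC w x z (hsub w (by first | exact Or.inl h.symm | exact Or.inr (Or.inl h'.symm) | exact Or.inr (Or.inr h''.symm))) (hsub x (by first | exact Or.inl h.symm | exact Or.inr (Or.inl h'.symm) | exact Or.inr (Or.inr h''.symm))) (hsub z (by first | exact Or.inl h.symm | exact Or.inr (Or.inl h'.symm) | exact Or.inr (Or.inr h''.symm))) hwx)
        | exact d3 (hC w y z (hsub w (by first | exact Or.inl h.symm | exact Or.inr (Or.inl h'.symm) | exact Or.inr (Or.inr h''.symm))) (hsub y (by first | exact Or.inl h.symm | exact Or.inr (Or.inl h'.symm) | exact Or.inr (Or.inr h''.symm))) (hsub z (by first | exact Or.inl h.symm | exact Or.inr (Or.inl h'.symm) | exact Or.inr (Or.inr h''.symm))) hwy)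
        | exact d4 (hC x y z (hsub x (by first | exact Or.inl h.symm | exact Or.inr (Or.inl h'.symm) | exact Or.inr (Or.inr h''.symm))) (hsub y (by first | exact Or.inl h.symm | exact Or.inr (Or.inl h'.symm) | exact Or.inr (Or.inr h''.symm))) (hsub z (by first | exact Or.inl h.symm | exact Or.inr (Or.inl h'.symm) | exact Or.inr (Or.inr h''.symm))) hxy)
    rcases hmem p1 hp1 with hA1 | hE1 <;> rcases hmem p2 hp2 with hA2 | hE2 <;>
      rcases hmem p3 hp3 with hA3 | hE3 <;> rcases hmem p4 hp4 with hA4 | hE4 <;>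
      first
      | exact KE p1 p2 p3 hE1 hE2 hE3 h12 h13 h23 hp1 hp2 hp3
      | exact KE p1 p2 p4 hE1 hE2 hE4 h12 h14 h24 hp1 hp2 hp4
      | exact KE p1 p3 p4 hE1 hE3 hE4 h13 h14 h34 hp1 hp3 hp4
      | exact KE p2 p3 p4 hE2 hE3 hE4 h23 h24 h34 hp2 hp3 hp4
      | exact KA p1 p2 hA1 hA2 h12 p3 hE3 hp1 hp2 hp3
      | exact KA p1 p2 hA1 hA2 h12 p4 hE4 hp1 hp2 hp4
      | exact KA p1 p3 hA1 hA3 h13 p2 hE2 hp1 hp3 hp2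
      | exact KA p1 p3 hA1 hA3 h13 p4 hE4 hp1 hp3 hp4
      | exact KA p1 p4 hA1 hA4 h14 p2 hE2 hp1 hp4 hp2
      | exact KA p1 p4 hA1 hA4 h14 p3 hE3 hp1 hp4 hp3
      | exact KA p2 p3 hA2 hA3 h23 p1 hE1 hp2 hp3 hp1
      | exact KA p2 p3 hA2 hA3 h23 p4 hE4 hp2 hp3 hp4
      | exact KA p2 p4 hA2 hA4 h24 p1 hE1 hp2 hp4 hp1
      | exact KA p2 p4 hA2 hA4 h24 p3 hE3 hp2 hp4 hp3
      | exact KA p3 p4 hA3 hA4 h34 p1 hE1 hp3 hp4 hp1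
      | exact KA p3 p4 hA3 hA4 h34 p2 hE2 hp3 hp4 hp2
      | exact pigeonAAAA hA1 hA2 hA3 hA4 h12 h13 h14 h23 h24 h34
  · -- no conic vanishes on all of S
    intro Q hQ0 hQdeg
    by_contra hno
    push_neg at hno
    obtain ⟨k0, k1, k2, k3, k4, k5, hP⟩ := rep Q hQdeg
    have hval : ∀ p : Fin 2 → ℂ, p ∈ ({a, b, c, w, x, y, z} : Set (Fin 2 → ℂ)) →
        P6 k0 k1 k2 k3 k4 k5 (p 0) (p 1) = 0 := by
      intro p hp
      have h1 := hno p hp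
      rw [hP p] at h1
      simp only [P6]
      linear_combination h1
    have ea := hval a (by simp)
    have eb := hval b (by simp)
    have ec := hval c (by simp)
    have ew := hval w (by simp)
    have ex := hval x (by simp)
    have ey := hval y (by simp)
    have hLw : (b 0 - a 0) * (w 1 - a 1) - (b 1 - a 1) * (w 0 - a 0) ≠ 0 := by
      simp only [dt] at hw; exact hw
    have hLx : (b 0 - a 0) * (x 1 - a 1) - (b 1 - a 1) * (x 0 - a 0) ≠ 0 := by
      simp only [dt] at hx; exact hx
    have hLy : (b 0 - a 0) * (y 1 - a 1) - (b 1 - a 1) * (y 0 - a 0) ≠ 0 := by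
      simp only [dt] at hy; exact hy
    have hdet : (x 0 - w 0) * (y 1 - w 1) - (x 1 - w 1) * (y 0 - w 0) ≠ 0 := by
      simp only [dt] at d1; exact d1
    have hallP : ∀ z0 z1 : ℂ, P6 k0 k1 k2 k3 k4 k5 z0 z1 = 0 := by
      rcases pt_ne hab with hV | hV
      · have hV' : b 0 - a 0 ≠ 0 := sub_ne_zero.mpr (Ne.symm hV)
        exact CORE k0 k1 k2 k3 k4 k5 (a 0) (a 1) (b 0 - a 0) (b 1 - a 1) s
          (w 0) (w 1) (x 0) (x 1) (y 0) (y 1) hV' hs0 hs1 ea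
          (by rw [show a 0 + (b 0 - a 0) = b 0 by ring,
                show a 1 + (b 1 - a 1) = b 1 by ring]; exact eb)
          (by rw [show a 0 + s * (b 0 - a 0) = c 0 by linear_combination -hc0,
                show a 1 + s * (b 1 - a 1) = c 1 by linear_combination -hc1]; exact ec)
          ew hLw ex hLx ey hLy hdet
      · have hV' : b 1 - a 1 ≠ 0 := sub_ne_zero.mpr (Ne.symm hV)
        have hall' := CORE k0 k2 k1 k5 k4 k3 (a 1) (a 0) (b 1 - a 1) (b 0 - a 0) s
          (w 1) (w 0) (x 1) (x 0) (y 1) (y 0) hV' hs0 hs1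
          (by rw [← P6_swap]; exact ea)
          (by rw [show a 1 + (b 1 - a 1) = b 1 by ring,
                show a 0 + (b 0 - a 0) = b 0 by ring, ← P6_swap]; exact eb)
          (by rw [show a 1 + s * (b 1 - a 1) = c 1 by linear_combination -hc1,
                show a 0 + s * (b 0 - a 0) = c 0 by linear_combination -hc0, ← P6_swap]
              exact ec)
          (by rw [← P6_swap]; exact ew)
          (by intro hh; exact hLw (by linear_combination -hh))
          (by rw [← P6_swap]; exact ex)
          (by intro hh; exact hLx (by linear_combination -hh))
          (by rw [← P6_swap]; exact ey)
          (by intro hh; exact hLy (by linear_combination -hh))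
          (by intro hh; exact hdet (by linear_combination -hh))
        intro z0 z1
        rw [P6_swap]
        exact hall' z1 z0
    apply hQ0
    apply MvPolynomial.funext
    intro zz
    rw [hP zz, map_zero]
    have := hallP (zz 0) (zz 1)
    simp only [P6] at this
    linear_combination this
lemma dt_swap12 (p q r : Fin 2 → ℂ) : dt q p r = -dt p q r := by
  simp only [dt]; ring

lemma eval_mul_lnp_ne {p q r s' t : Fin 2 → ℂ}
    (h : MvPolynomial.eval t (lnp p q * lnp r s') ≠ 0) :
    dt p q t ≠ 0 ∧ dt r s' t ≠ 0 := by
  rw [map_mul, eval_lnp, eval_lnp] at h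
  exact ⟨left_ne_zero_of_mul h, right_ne_zero_of_mul h⟩

lemma deg_mul_lnp (p q r s' : Fin 2 → ℂ) : (lnp p q * lnp r s').totalDegree ≤ 2 :=
  le_trans (totalDegree_mul _ _)
    (le_trans (add_le_add (lnp_totalDegree p q) (lnp_totalDegree r s')) (by norm_num))

/-- Branch of the construction where d, f, g are collinear (with outsider e). -/
lemma BRANCH (V : Set (Fin 2 → ℂ))
    (hV : ∀ Q : MvPolynomial (Fin 2) ℂ, Q ≠ 0 → Q.totalDegree ≤ 2 →
      ∃ p₁ ∈ V, ∃ p₂ ∈ V, p₁ ≠ p₂ ∧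
        MvPolynomial.eval p₁ Q ≠ 0 ∧ MvPolynomial.eval p₂ Q ≠ 0)
    (a b c d e f g : Fin 2 → ℂ)
    (haV : a ∈ V) (hbV : b ∈ V) (hcV : c ∈ V)
    (hdV : d ∈ V) (heV : e ∈ V) (hfV : f ∈ V) (hgV : g ∈ V)
    (hab : a ≠ b) (hac : a ≠ c) (hbc : b ≠ c) (habc : dt a b c = 0)
    (hLd : dt a b d ≠ 0) (hLe : dt a b e ≠ 0) (hLf : dt a b f ≠ 0) (hLg : dt a b g ≠ 0)
    (hdef : dt d e f ≠ 0) (hdeg : dt d e g ≠ 0) (hfg : f ≠ g)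
    (hdfg : dt d f g = 0) :
    ∃ S ⊆ V, S.ncard = 7 ∧
      (∀ T ⊆ S, T.ncard = 4 → ¬ Collinear ℂ T) ∧
      ∀ Q : MvPolynomial (Fin 2) ℂ, Q ≠ 0 → Q.totalDegree ≤ 2 →
        ∃ p ∈ S, MvPolynomial.eval p Q ≠ 0 := by
  have hdf : d ≠ f := fun h => hdef (by rw [h]; exact dt_self_outer f e)
  have hgd : g ≠ d := fun h => hdeg (by rw [← h]; exact dt_self_outer g e)
  have hedf : dt e d f ≠ 0 := by rw [dt_swap12]; exact neg_ne_zero.mpr hdef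
  have hedg : dt e d g ≠ 0 := by rw [dt_swap12]; exact neg_ne_zero.mpr hdeg
  -- parametrize g on the line through d and f
  obtain ⟨t, hg0, hg1⟩ := PARAM hdf hdfg
  have ht0 : t ≠ 0 := by
    intro h
    rw [h] at hg0 hg1
    exact hgd (pt_ext (by linear_combination hg0) (by linear_combination hg1))
  have ht1 : t ≠ 1 := by
    intro h
    rw [h] at hg0 hg1
    exact hfg (pt_ext (by linear_combination hg0) (by linear_combination hg1)).symm
  have hefg : dt e f g ≠ 0 := by
    intro hcontr
    have key : (t - 1) * dt e d f = 0 := by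
      simp only [dt] at hcontr hg0 hg1 ⊢
      linear_combination hcontr - (f 0 - e 0) * hg1 + (f 1 - e 1) * hg0
    rcases mul_eq_zero.mp key with h' | h'
    · exact ht1 (by linear_combination h')
    · exact hedf h'
  -- obtain the final point h off the line ab and off the line dfg
  obtain ⟨h1, hh1V, h2, hh2V, hne12, hev1, hev2⟩ :=
    hV (lnp a b * lnp d f) (mul_ne_zero (lnp_ne_zero hab) (lnp_ne_zero hdf))
      (deg_mul_lnp a b d f)
  obtain ⟨h, hhV, hhe, hLh, hnh⟩ :
      ∃ h, h ∈ V ∧ h ≠ e ∧ dt a b h ≠ 0 ∧ dt d f h ≠ 0 := by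
    by_cases hc : h1 = e
    · obtain ⟨u1, u2⟩ := eval_mul_lnp_ne hev2
      exact ⟨h2, hh2V, fun hh => hne12 (by rw [hc, hh]), u1, u2⟩
    · obtain ⟨u1, u2⟩ := eval_mul_lnp_ne hev1
      exact ⟨h1, hh1V, hc, u1, u2⟩
  have hfgh : dt f g h ≠ 0 := by
    intro hcontr
    have key : (t - 1) * dt d f h = 0 := by
      simp only [dt] at hcontr hg0 hg1 ⊢
      linear_combination hcontr - (h 1 - f 1) * hg0 + (h 0 - f 0) * hg1
    rcases mul_eq_zero.mp key with h' | h'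
    · exact ht1 (by linear_combination h')
    · exact hnh h'
  have hdgh : dt d g h ≠ 0 := by
    intro hcontr
    have key : t * dt d f h = 0 := by
      simp only [dt] at hcontr hg0 hg1 ⊢
      linear_combination hcontr - (h 1 - d 1) * hg0 + (h 0 - d 0) * hg1
    rcases mul_eq_zero.mp key with h' | h'
    · exact ht0 h'
    · exact hnh h'
  by_cases c1 : dt e d h = 0
  · have nc2 : dt e f h ≠ 0 := fun c2 => hedf (TD c1 c2 hhe)
    have nc3 : dt e g h ≠ 0 := fun c3 => hedg (TD c1 c3 hhe)
    exact FINAL V a b c e f g h haV hbV hcV heV hfV hgV hhV hab hac hbc habc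
      hLe hLf hLg hLh hefg nc2 nc3 hfgh
  · by_cases c2 : dt e f h = 0
    · have nc3 : dt e g h ≠ 0 := fun c3 => hefg (TD c2 c3 hhe)
      exact FINAL V a b c e d g h haV hbV hcV heV hdV hgV hhV hab hac hbc habc
        hLe hLd hLg hLh hedg c1 nc3 hdgh
    · exact FINAL V a b c e d f h haV hbV hcV heV hdV hfV hhV hab hac hbc habc
        hLe hLd hLf hLh hedf c1 c2 hnh




/-- Case 4 of the proof of Theorem 1.2: if `V ⊆ ℂ²` has at least two points outside
every algebraic curve of degree at most `2`, and `V` contains three distinct collinear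
points, then `V` has a `7`-point subset `S` with no four points collinear and not
contained in any curve of degree at most `2` (i.e. `m₁(S) ≤ 3` and `m₂(S) ≤ 6`). -/
theorem entire_green_statement_16 (V : Set (Fin 2 → ℂ))
    (hV : ∀ Q : MvPolynomial (Fin 2) ℂ, Q ≠ 0 → Q.totalDegree ≤ 2 →
      ∃ p₁ ∈ V, ∃ p₂ ∈ V, p₁ ≠ p₂ ∧
        MvPolynomial.eval p₁ Q ≠ 0 ∧ MvPolynomial.eval p₂ Q ≠ 0)
    (hcol : ∃ a ∈ V, ∃ b ∈ V, ∃ c ∈ V, a ≠ b ∧ a ≠ c ∧ b ≠ c ∧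
      Collinear ℂ ({a, b, c} : Set (Fin 2 → ℂ))) :
    ∃ S ⊆ V, S.ncard = 7 ∧
      (∀ T ⊆ S, T.ncard = 4 → ¬ Collinear ℂ T) ∧
      ∀ Q : MvPolynomial (Fin 2) ℂ, Q ≠ 0 → Q.totalDegree ≤ 2 →
        ∃ p ∈ S, MvPolynomial.eval p Q ≠ 0 := by
  obtain ⟨a, haV, b, hbV, c, hcV, hab, hac, hbc, hcolabc⟩ := hcol
  have habc : dt a b c = 0 := (collinear_iff_dt hab).mp hcolabc
  obtain ⟨d, hdV, e, heV, hde, hevd, heve⟩ :=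
    hV (lnp a b * lnp a b) (mul_ne_zero (lnp_ne_zero hab) (lnp_ne_zero hab))
      (deg_mul_lnp a b a b)
  have hLd : dt a b d ≠ 0 := (eval_mul_lnp_ne hevd).1
  have hLe : dt a b e ≠ 0 := (eval_mul_lnp_ne heve).1
  obtain ⟨f, hfV, g, hgV, hfg, hevf, hevg⟩ :=
    hV (lnp a b * lnp d e) (mul_ne_zero (lnp_ne_zero hab) (lnp_ne_zero hde))
      (deg_mul_lnp a b d e)
  obtain ⟨hLf, hdef⟩ := eval_mul_lnp_ne hevf
  obtain ⟨hLg, hdeg⟩ := eval_mul_lnp_ne hevg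
  by_cases h1 : dt d f g = 0
  · exact BRANCH V hV a b c d e f g haV hbV hcV hdV heV hfV hgV hab hac hbc habc
      hLd hLe hLf hLg hdef hdeg hfg h1
  · by_cases h2 : dt e f g = 0
    · have hedf : dt e d f ≠ 0 := by rw [dt_swap12]; exact neg_ne_zero.mpr hdef
      have hedg : dt e d g ≠ 0 := by rw [dt_swap12]; exact neg_ne_zero.mpr hdeg
      exact BRANCH V hV a b c e d f g haV hbV hcV heV hdV hfV hgV hab hac hbc habc
        hLe hLd hLf hLg hedf hedg hfg h2
    · exact FINAL V a b c d e f g haV hbV hcV hdV heV hfV hgV hab hac hbc habc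
        hLd hLe hLf hLg hdef hdeg h1 h2
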